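/- Rank identity for composable Mayer–Vietoris maps. Assume in addition that A₂, A₃, B₁, B₂, B₃ are finite-dimensional. Then, with the maps f₁₂, f₂₃, f, f₍₁₂,₃₎, f₍₁,₂₃₎ as in the context, dim im(f₁₂) + dim im(f₍₁₂,₃₎) = dim im(f) = dim im(f₂₃) + dim im(f₍₁,₂₃₎). -/

import Mathlib

open LinearMap Submodule Module

private lemma mv_aux_rank {V W : Type*} [AddCommGroup V] [Module ℝ V] [AddCommGroup W]
    [Module ℝ W] [FiniteDimensional ℝ V] (π : V →ₗ[ℝ] W) (S : Submodule ℝ V)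
    (h : LinearMap.ker π ≤ S) :
    Module.finrank ℝ ↥(LinearMap.ker π) + Module.finrank ℝ ↥(S.map π)
      = Module.finrank ℝ ↥S := by
  have h1 := (π.domRestrict S).finrank_range_add_finrank_ker
  rw [LinearMap.range_domRestrict, LinearMap.ker_domRestrict] at h1
  rw [← h1, add_comm]
  congr 1
  exact (Submodule.comapSubtypeEquivOfLe h).finrank_eq.symm

/-- **Rank identity for composable Mayer–Vietoris maps.**  If `A₂, A₃, B₁, B₂, B₃` are
finite-dimensional, then with `f`, `f₍₁₂,₃₎ = g` and `f₍₁,₂₃₎ = g'` as in the paper,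
`dim im f₁₂ + dim im f₍₁₂,₃₎ = dim im f = dim im f₂₃ + dim im f₍₁,₂₃₎`. -/
theorem mayerVietoris_rank_identity
    {A₂ A₃ B₁ B₂ B₃ : Type*}
    [AddCommGroup A₂] [Module ℝ A₂] [AddCommGroup A₃] [Module ℝ A₃]
    [AddCommGroup B₁] [Module ℝ B₁] [AddCommGroup B₂] [Module ℝ B₂]
    [AddCommGroup B₃] [Module ℝ B₃]
    [FiniteDimensional ℝ A₂] [FiniteDimensional ℝ A₃] [FiniteDimensional ℝ B₁]
    [FiniteDimensional ℝ B₂] [FiniteDimensional ℝ B₃]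
    (f₁₂ : A₂ →ₗ[ℝ] B₁ × B₂) (f₂₃ : A₃ →ₗ[ℝ] B₂ × B₃)
    (f : A₂ × A₃ →ₗ[ℝ] B₁ × B₂ × B₃)
    (hf : ∀ p : A₂ × A₃,
      f p = ((f₁₂ p.1).1, ((f₁₂ p.1).2 + (f₂₃ p.2).1, (f₂₃ p.2).2)))
    (g : A₃ →ₗ[ℝ] ((B₁ × B₂) ⧸ LinearMap.range f₁₂) × B₃)
    (hg : ∀ a : A₃,
      g a = (Submodule.mkQ (LinearMap.range f₁₂) (0, (f₂₃ a).1), (f₂₃ a).2))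
    (g' : A₂ →ₗ[ℝ] B₁ × ((B₂ × B₃) ⧸ LinearMap.range f₂₃))
    (hg' : ∀ a : A₂,
      g' a = ((f₁₂ a).1, Submodule.mkQ (LinearMap.range f₂₃) ((f₁₂ a).2, 0))) :
    Module.finrank ℝ ↥(LinearMap.range f₁₂) + Module.finrank ℝ ↥(LinearMap.range g) =
        Module.finrank ℝ ↥(LinearMap.range f) ∧
    Module.finrank ℝ ↥(LinearMap.range f) =
        Module.finrank ℝ ↥(LinearMap.range f₂₃) + Module.finrank ℝ ↥(LinearMap.range g') := by
  constructor
  · -- π₁ : B₁ × B₂ × B₃ → ((B₁×B₂)⧸range f₁₂) × B₃,  (b₁,b₂,b₃) ↦ (mkQ (b₁,b₂), b₃)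
    set π₁ : (B₁ × B₂ × B₃) →ₗ[ℝ] (((B₁ × B₂) ⧸ LinearMap.range f₁₂) × B₃) :=
      LinearMap.prod
        ((LinearMap.range f₁₂).mkQ.comp
          (LinearMap.prod (LinearMap.fst ℝ B₁ (B₂ × B₃))
            ((LinearMap.fst ℝ B₂ B₃).comp (LinearMap.snd ℝ B₁ (B₂ × B₃)))))
        ((LinearMap.snd ℝ B₂ B₃).comp (LinearMap.snd ℝ B₁ (B₂ × B₃))) with hπ₁
    have hker : LinearMap.ker π₁ ≤ LinearMap.range f := by
      rintro ⟨b₁, b₂, b₃⟩ hx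
      simp only [hπ₁, LinearMap.mem_ker, LinearMap.prod_apply, Function.prod, Prod.mk_eq_zero,
        LinearMap.comp_apply, LinearMap.fst_apply, LinearMap.snd_apply,
        Submodule.mkQ_apply, Submodule.Quotient.mk_eq_zero] at hx
      obtain ⟨⟨a₂, ha₂⟩, hb₃⟩ := hx
      refine ⟨(a₂, 0), ?_⟩
      rw [hf]
      simp [ha₂, hb₃, Prod.ext_iff]
    have hkerrank : Module.finrank ℝ ↥(LinearMap.ker π₁)
        = Module.finrank ℝ ↥(LinearMap.range f₁₂) := by
      set j : (B₁ × B₂) →ₗ[ℝ] (B₁ × B₂ × B₃) :=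
        LinearMap.prod (LinearMap.fst ℝ B₁ B₂)
          (LinearMap.prod (LinearMap.snd ℝ B₁ B₂) 0) with hj
      have hjinj : Function.Injective j := by
        intro x y hxy
        simpa [hj, LinearMap.prod_apply, Pi.prod, Prod.ext_iff] using hxy
      have hkereq : LinearMap.ker π₁ = (LinearMap.range f₁₂).map j := by
        ext ⟨b₁, b₂, b₃⟩
        simp only [hπ₁, hj, LinearMap.mem_ker, LinearMap.prod_apply, Function.prod,
          Prod.mk_eq_zero, LinearMap.comp_apply, LinearMap.fst_apply, LinearMap.snd_apply,
          Submodule.mkQ_apply, Submodule.Quotient.mk_eq_zero, Submodule.mem_map,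
          LinearMap.zero_apply, Prod.mk.injEq]
        constructor
        · rintro ⟨hb, hb₃⟩
          exact ⟨(b₁, b₂), hb, rfl, rfl, hb₃.symm⟩
        · rintro ⟨⟨c₁, c₂⟩, hc, h1, h2, h3⟩
          exact ⟨by rwa [← h1, ← h2], h3.symm⟩
      rw [hkereq]
      exact (Submodule.equivMapOfInjective j hjinj _).finrank_eq.symm
    have hmap : (LinearMap.range f).map π₁ = LinearMap.range g := by
      rw [← LinearMap.range_comp]
      have : π₁.comp f = g.comp (LinearMap.snd ℝ A₂ A₃) := by
        apply LinearMap.ext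
        rintro ⟨a₂, a₃⟩
        simp only [hπ₁, LinearMap.comp_apply, LinearMap.prod_apply, Function.prod,
          LinearMap.fst_apply, LinearMap.snd_apply, hf, hg, Submodule.mkQ_apply]
        refine Prod.ext ?_ rfl
        have : ((f₁₂ a₂).1, (f₁₂ a₂).2 + (f₂₃ a₃).1)
            = f₁₂ a₂ + ((0 : B₁), (f₂₃ a₃).1) := by
          simp [Prod.ext_iff]
        rw [this]
        simp only [Submodule.Quotient.mk_add]
        rw [(Submodule.Quotient.mk_eq_zero _).mpr (LinearMap.mem_range_self f₁₂ a₂)]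
        simp
      rw [this, LinearMap.range_comp, (LinearMap.range_eq_top.mpr Prod.snd_surjective :
          LinearMap.range (LinearMap.snd ℝ A₂ A₃) = ⊤),
        Submodule.map_top]
    have := mv_aux_rank π₁ (LinearMap.range f) hker
    rw [hmap, hkerrank] at this
    exact this
  · -- π₂ : B₁ × B₂ × B₃ → B₁ × ((B₂×B₃)⧸range f₂₃),  (b₁,b₂,b₃) ↦ (b₁, mkQ (b₂,b₃))
    set π₂ : (B₁ × B₂ × B₃) →ₗ[ℝ] (B₁ × ((B₂ × B₃) ⧸ LinearMap.range f₂₃)) :=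
      LinearMap.prod (LinearMap.fst ℝ B₁ (B₂ × B₃))
        ((LinearMap.range f₂₃).mkQ.comp (LinearMap.snd ℝ B₁ (B₂ × B₃))) with hπ₂
    have hker : LinearMap.ker π₂ ≤ LinearMap.range f := by
      rintro ⟨b₁, b₂, b₃⟩ hx
      simp only [hπ₂, LinearMap.mem_ker, LinearMap.prod_apply, Function.prod, Prod.mk_eq_zero,
        LinearMap.comp_apply, LinearMap.fst_apply, LinearMap.snd_apply,
        Submodule.mkQ_apply, Submodule.Quotient.mk_eq_zero] at hx
      obtain ⟨hb₁, ⟨a₃, ha₃⟩⟩ := hx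
      refine ⟨(0, a₃), ?_⟩
      rw [hf]
      simp [ha₃, hb₁, Prod.ext_iff]
    have hkerrank : Module.finrank ℝ ↥(LinearMap.ker π₂)
        = Module.finrank ℝ ↥(LinearMap.range f₂₃) := by
      set j : (B₂ × B₃) →ₗ[ℝ] (B₁ × B₂ × B₃) :=
        LinearMap.prod 0 LinearMap.id with hj
      have hjinj : Function.Injective j := by
        intro x y hxy
        simpa [hj, LinearMap.prod_apply, Pi.prod, Prod.ext_iff] using hxy
      have hkereq : LinearMap.ker π₂ = (LinearMap.range f₂₃).map j := by
        ext ⟨b₁, b₂, b₃⟩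
        simp only [hπ₂, hj, LinearMap.mem_ker, LinearMap.prod_apply, Function.prod,
          Prod.mk_eq_zero, LinearMap.comp_apply, LinearMap.fst_apply, LinearMap.snd_apply,
          Submodule.mkQ_apply, Submodule.Quotient.mk_eq_zero, Submodule.mem_map,
          LinearMap.zero_apply, LinearMap.id_apply, Prod.mk.injEq]
        constructor
        · rintro ⟨hb₁, hb⟩
          exact ⟨(b₂, b₃), hb, hb₁.symm, rfl⟩
        · rintro ⟨⟨c₂, c₃⟩, hc, h1, h2⟩
          exact ⟨h1.symm, by rwa [← h2]⟩
      rw [hkereq]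
      exact (Submodule.equivMapOfInjective j hjinj _).finrank_eq.symm
    have hmap : (LinearMap.range f).map π₂ = LinearMap.range g' := by
      rw [← LinearMap.range_comp]
      have : π₂.comp f = g'.comp (LinearMap.fst ℝ A₂ A₃) := by
        apply LinearMap.ext
        rintro ⟨a₂, a₃⟩
        simp only [hπ₂, LinearMap.comp_apply, LinearMap.prod_apply, Function.prod,
          LinearMap.fst_apply, LinearMap.snd_apply, hf, hg', Submodule.mkQ_apply]
        refine Prod.ext rfl ?_
        have : (((f₁₂ a₂).2 + (f₂₃ a₃).1, (f₂₃ a₃).2) : B₂ × B₃)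
            = ((f₁₂ a₂).2, 0) + f₂₃ a₃ := by
          simp [Prod.ext_iff]
        rw [this]
        simp only [Submodule.Quotient.mk_add]
        rw [(Submodule.Quotient.mk_eq_zero _).mpr (LinearMap.mem_range_self f₂₃ a₃)]
        simp
      rw [this, LinearMap.range_comp, (LinearMap.range_eq_top.mpr Prod.fst_surjective :
          LinearMap.range (LinearMap.fst ℝ A₂ A₃) = ⊤),
        Submodule.map_top]
    have := mv_aux_rank π₂ (LinearMap.range f) hker
    rw [hmap, hkerrank] at this
    exact this.symm
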